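/- arXiv:2201.04738 — 2 statements merged into one kernel-verified Lean document; each statement's English description precedes it below -/
import Mathlib

section
/- Let G ∈ ℝ^{n×n} be symmetric positive semidefinite with orthonormal eigenvectors u₁,…,u_n (with respect to an inner product ⟨·,·⟩) and eigenvalues λ₁ ≥ … ≥ λ_n ≥ 0. Let t ↦ G_t be continuous and let r solve r'(t) = -G_t r(t), with the additional property that t ↦ ‖r(t)‖ is nonincreasing. Let P_k be the orthogonal projection onto span{u₁,…,u_k}. If λ_k > 0, then ‖P_k(r(t) - exp(-G t) r(0))‖ ≤ ((1 - exp(-λ_k t))/λ_k) · sup_{s ∈ [0,t]} ‖G - G_s‖_op · ‖r(0)‖. -/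
open scoped Matrix
open MeasureTheory


open scoped RealInnerProductSpace

lemma aux_exp_eigen {E : Type*} [NormedAddCommGroup E] [NormedSpace ℝ E] [CompleteSpace E]
    (A : E →L[ℝ] E) (x : E) (c : ℝ) (h : A x = c • x) :
    NormedSpace.exp A x = Real.exp c • x := by
  have hpow : ∀ m : ℕ, (A ^ m) x = c ^ m • x := by
    intro m
    induction m with
    | zero => simp
    | succ m ih =>
      rw [pow_succ, ContinuousLinearMap.mul_apply, h, _root_.map_smul, ih, smul_smul, mul_comm,
        ← pow_succ]
  have hsum := NormedSpace.expSeries_summable' (𝕂 := ℝ) A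
  have h2 : (∑' (m : ℕ), ((m.factorial : ℝ))⁻¹ • A ^ m) x
      = ∑' (m : ℕ), (((m.factorial : ℝ))⁻¹ • A ^ m) x :=
    (ContinuousLinearMap.apply ℝ E x).map_tsum hsum
  rw [NormedSpace.exp_eq_tsum ℝ, h2]
  have h4 : ∀ m : ℕ, (((m.factorial : ℝ))⁻¹ • A ^ m) x = (((m.factorial : ℝ))⁻¹ * c ^ m) • x := fun m => by
    rw [ContinuousLinearMap.smul_apply, hpow, smul_smul]
  have hs2 : Summable fun m : ℕ => (m.factorial : ℝ)⁻¹ * c ^ m := by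
    simpa [smul_eq_mul] using NormedSpace.expSeries_summable' (𝕂 := ℝ) c
  rw [tsum_congr h4, hs2.tsum_smul_const]
  congr 1
  rw [Real.exp_eq_exp_ℝ, NormedSpace.exp_eq_tsum ℝ]
  exact tsum_congr fun m => (smul_eq_mul ..).symm

lemma aux_integral_exp (lam t : ℝ) (hlam : lam ≠ 0) :
    (∫ s in (0:ℝ)..t, Real.exp (-lam * (t - s))) = (1 - Real.exp (-lam * t)) / lam := by
  have hd : ∀ s : ℝ, HasDerivAt (fun s : ℝ => Real.exp (-lam * (t - s)) / lam)
      (Real.exp (-lam * (t - s))) s := by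
    intro s
    have h1 : HasDerivAt (fun s : ℝ => -lam * (t - s)) lam s := by
      simpa using ((hasDerivAt_id s).const_sub t).const_mul (-lam)
    have h2 := (Real.hasDerivAt_exp (-lam * (t - s))).comp s h1
    have h3 := h2.div_const lam
    simpa [mul_div_cancel_right₀ _ hlam, Function.comp] using h3
  have hint : IntervalIntegrable (fun s : ℝ => Real.exp (-lam * (t - s)))
      MeasureTheory.volume 0 t :=
    (Real.continuous_exp.comp (by continuity)).intervalIntegrable 0 t
  rw [intervalIntegral.integral_eq_sub_of_hasDerivAt (fun s _ => hd s) hint]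
  rw [sub_self, mul_zero, sub_zero, Real.exp_zero]
  ring

lemma aux_proj_contract {n : ℕ}
    (u : Fin n → EuclideanSpace ℝ (Fin n)) (hu : Orthonormal ℝ u)
    (lam : Fin n → ℝ) (hmono : Antitone lam)
    (A : EuclideanSpace ℝ (Fin n) →L[ℝ] EuclideanSpace ℝ (Fin n))
    (hsymA : ∀ x y, ⟪A x, y⟫ = ⟪x, A y⟫)
    (heig : ∀ i, A (u i) = lam i • u i) (k : Fin n)
    (K : Submodule ℝ (EuclideanSpace ℝ (Fin n)))
    (hK : K = Submodule.span ℝ (Set.range fun i : {i : Fin n // i ≤ k} => u i))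
    (τ : ℝ) (hτ : 0 ≤ τ) (v : EuclideanSpace ℝ (Fin n)) :
    ‖(K.subtypeL ∘L K.orthogonalProjectionOnto) (NormedSpace.exp (-(τ • A)) v)‖ ≤
      Real.exp (-(lam k * τ)) * ‖v‖ := by
  classical
  have hu' : Orthonormal ℝ (fun i : {i : Fin n // i ≤ k} => u i) :=
    hu.comp _ Subtype.val_injective
  set W : EuclideanSpace ℝ (Fin n) →L[ℝ] EuclideanSpace ℝ (Fin n) := -(τ • A) with hW
  have hWsym : (W : EuclideanSpace ℝ (Fin n) →ₗ[ℝ] EuclideanSpace ℝ (Fin n)).IsSymmetric := by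
    intro x y
    show ⟪W x, y⟫ = ⟪x, W y⟫
    rw [hW]
    simp only [ContinuousLinearMap.neg_apply, ContinuousLinearMap.smul_apply,
      inner_neg_left, inner_neg_right, real_inner_smul_left, real_inner_smul_right, hsymA x y]
  have hWsa : IsSelfAdjoint W := ContinuousLinearMap.isSelfAdjoint_iff_isSymmetric.mpr hWsym
  have hWexp_sa : IsSelfAdjoint (NormedSpace.exp W) := hWsa.exp
  have hWeig : ∀ i, NormedSpace.exp W (u i) = Real.exp (-(τ * lam i)) • u i := by
    intro i
    refine aux_exp_eigen W (u i) (-(τ * lam i)) ?_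
    rw [hW]
    simp [heig, smul_smul]
  have hsym := ContinuousLinearMap.isSelfAdjoint_iff_isSymmetric.mp hWexp_sa
  have hmem : ∀ i : {i : Fin n // i ≤ k}, u i ∈ K := fun i =>
    hK ▸ Submodule.subset_span ⟨i, rfl⟩
  set w : EuclideanSpace ℝ (Fin n) := NormedSpace.exp W v with hw
  set c : {i : Fin n // i ≤ k} → ℝ := fun i => ⟪u i, w⟫ with hc
  have hproj : ((K.orthogonalProjectionOnto w : K) : EuclideanSpace ℝ (Fin n))
      = ∑ i : {i : Fin n // i ≤ k}, c i • u i := by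
    have hTm : (∑ i : {i : Fin n // i ≤ k}, c i • u i) ∈ K :=
      Submodule.sum_mem _ fun i _ => Submodule.smul_mem _ _ (hmem i)
    refine Submodule.eq_starProjection_of_mem_of_inner_eq_zero hTm ?_
    intro z hz
    rw [hK] at hz
    induction hz using Submodule.span_induction with
    | mem x hx =>
      obtain ⟨j, rfl⟩ := hx
      rw [inner_sub_left]
      have h1 : ⟪(∑ i : {i : Fin n // i ≤ k}, c i • u i), u j⟫ = c j := by
        rw [real_inner_comm]
        exact hu'.inner_right_fintype c j
      rw [h1]
      show ⟪w, u (j : Fin n)⟫ - ⟪u (j : Fin n), w⟫ = 0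
      rw [real_inner_comm, sub_self]
    | zero => simp
    | add x y hx hy ihx ihy => rw [inner_add_right, ihx, ihy, add_zero]
    | smul a x hx ihx => rw [real_inner_smul_right, ihx, mul_zero]
  have hPw : (K.subtypeL ∘L K.orthogonalProjectionOnto) w
      = ∑ i : {i : Fin n // i ≤ k}, c i • u i := hproj
  have hcval : ∀ i : {i : Fin n // i ≤ k}, c i = Real.exp (-(τ * lam i)) * ⟪u i, v⟫ := by
    intro i
    have h1 : ⟪u (i : Fin n), w⟫ = ⟪NormedSpace.exp W (u i), v⟫ := by
      rw [hw]
      exact (hsym (u i) v).symm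
    rw [hc]
    simp only [h1, hWeig i, real_inner_smul_left]
  have hnorm2 : ‖∑ i : {i : Fin n // i ≤ k}, c i • u i‖ ^ 2
      = ∑ i : {i : Fin n // i ≤ k}, (c i) ^ 2 := by
    rw [← real_inner_self_eq_norm_sq, hu'.inner_sum c c Finset.univ]
    simp [sq]
  have hbound : ∑ i : {i : Fin n // i ≤ k}, (c i) ^ 2
      ≤ Real.exp (-(lam k * τ)) ^ 2 * ‖v‖ ^ 2 := by
    have h1 : ∀ i : {i : Fin n // i ≤ k},
        (c i) ^ 2 ≤ Real.exp (-(lam k * τ)) ^ 2 * ⟪u i, v⟫ ^ 2 := by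
      intro i
      rw [hcval i, mul_pow]
      have hle : Real.exp (-(τ * lam i)) ≤ Real.exp (-(lam k * τ)) := by
        apply Real.exp_le_exp.mpr
        have := mul_le_mul_of_nonneg_left (hmono i.2) hτ
        nlinarith
      have h2 : Real.exp (-(τ * lam i)) ^ 2 ≤ Real.exp (-(lam k * τ)) ^ 2 :=
        pow_le_pow_left₀ (Real.exp_nonneg _) hle 2
      have h3 : (0:ℝ) ≤ ⟪u i, v⟫ ^ 2 := sq_nonneg _
      exact mul_le_mul_of_nonneg_right h2 h3
    calc ∑ i : {i : Fin n // i ≤ k}, (c i) ^ 2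
        ≤ ∑ i : {i : Fin n // i ≤ k}, Real.exp (-(lam k * τ)) ^ 2 * ⟪u i, v⟫ ^ 2 :=
          Finset.sum_le_sum fun i _ => h1 i
      _ = Real.exp (-(lam k * τ)) ^ 2 * ∑ i : {i : Fin n // i ≤ k}, ⟪u i, v⟫ ^ 2 := by
          rw [Finset.mul_sum]
      _ ≤ Real.exp (-(lam k * τ)) ^ 2 * ‖v‖ ^ 2 := by
          apply mul_le_mul_of_nonneg_left _ (sq_nonneg _)
          have := hu'.sum_inner_products_le (s := Finset.univ) v
          simpa [Real.norm_eq_abs, sq_abs] using this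
  have hfinal : ‖(K.subtypeL ∘L K.orthogonalProjectionOnto) w‖ ^ 2
      ≤ (Real.exp (-(lam k * τ)) * ‖v‖) ^ 2 := by
    rw [hPw, hnorm2, mul_pow]
    exact hbound
  have h5 := Real.sqrt_le_sqrt hfinal
  rwa [Real.sqrt_sq (norm_nonneg _), Real.sqrt_sq (by positivity)] at h5

set_option maxHeartbeats 1600000 in
/-- Projection of the deviation of the residual from the exact NTK-regime dynamics onto the
top-`k` eigendirections of `G` is controlled by `(1 - e^{-λ_k t})/λ_k` times the sup of the
operator-norm deviations `‖G - G_s‖` and `‖r 0‖`. -/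
theorem damped_deviations_projection_bound {n : ℕ}
    (G : Matrix (Fin n) (Fin n) ℝ) (hGsym : G.IsSymm) (hGpsd : G.PosSemidef)
    (u : Fin n → EuclideanSpace ℝ (Fin n)) (hu : Orthonormal ℝ u)
    (lam : Fin n → ℝ) (hmono : Antitone lam) (hnonneg : ∀ i, 0 ≤ lam i)
    (heig : ∀ i, Matrix.toEuclideanCLM (𝕜 := ℝ) G (u i) = lam i • u i)
    (Gt : ℝ → Matrix (Fin n) (Fin n) ℝ) (hGt : Continuous Gt)
    (r : ℝ → EuclideanSpace ℝ (Fin n))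
    (hr : ∀ t : ℝ, 0 ≤ t →
      HasDerivAt r (-(Matrix.toEuclideanCLM (𝕜 := ℝ) (Gt t)) (r t)) t)
    (hrmono : AntitoneOn (fun t => ‖r t‖) (Set.Ici (0:ℝ)))
    (k : Fin n) (hk : 0 < lam k)
    (K : Submodule ℝ (EuclideanSpace ℝ (Fin n)))
    (hK : K = Submodule.span ℝ (Set.range fun i : {i : Fin n // i ≤ k} => u i))
    (t : ℝ) (ht : 0 ≤ t) :
    ‖(K.subtypeL ∘L K.orthogonalProjectionOnto)
        (r t - NormedSpace.exp (-(t • Matrix.toEuclideanCLM (𝕜 := ℝ) G)) (r 0))‖ ≤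
      ((1 - Real.exp (-(lam k) * t)) / lam k) *
        (⨆ s ∈ Set.Icc (0:ℝ) t, ‖Matrix.toEuclideanCLM (𝕜 := ℝ) (G - Gt s)‖) * ‖r 0‖ := by
  classical
  set A : EuclideanSpace ℝ (Fin n) →L[ℝ] EuclideanSpace ℝ (Fin n) :=
    Matrix.toEuclideanCLM (𝕜 := ℝ) G with hA
  set P : EuclideanSpace ℝ (Fin n) →L[ℝ] EuclideanSpace ℝ (Fin n) :=
    K.subtypeL ∘L K.orthogonalProjectionOnto with hPdef
  set M : ℝ := ⨆ s ∈ Set.Icc (0:ℝ) t, ‖Matrix.toEuclideanCLM (𝕜 := ℝ) (G - Gt s)‖ with hMdef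
  -- the matrix-to-CLM map as a linear map, for continuity
  let φ : Matrix (Fin n) (Fin n) ℝ →ₗ[ℝ]
      (EuclideanSpace ℝ (Fin n) →L[ℝ] EuclideanSpace ℝ (Fin n)) :=
    { toFun := fun m => Matrix.toEuclideanCLM (𝕜 := ℝ) m
      map_add' := fun a b => map_add _ a b
      map_smul' := fun c m => _root_.map_smul _ c m }
  have hφc : Continuous φ := φ.continuous_of_finiteDimensional
  have hφ : ∀ m, φ m = Matrix.toEuclideanCLM (𝕜 := ℝ) m := fun m => rfl
  -- symmetry of A
  have hsymA : ∀ x y : EuclideanSpace ℝ (Fin n), ⟪A x, y⟫ = ⟪x, A y⟫ := by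
    have h1 : (Matrix.toEuclideanLin G).IsSymmetric :=
      Matrix.isHermitian_iff_isSymmetric.mp hGpsd.1
    intro x y
    have h2 : Matrix.toEuclideanLin G x = A x := by
      rw [hA, ← Matrix.coe_toEuclideanCLM_eq_toEuclideanLin]
      rfl
    have h3 : Matrix.toEuclideanLin G y = A y := by
      rw [hA, ← Matrix.coe_toEuclideanCLM_eq_toEuclideanLin]
      rfl
    have := h1 x y
    rwa [h2, h3] at this
  -- continuity of r on [0, t]
  have huIcc : Set.uIcc (0:ℝ) t = Set.Icc 0 t := Set.uIcc_of_le ht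
  have hrc : ContinuousOn r (Set.uIcc (0:ℝ) t) := by
    rw [huIcc]
    exact fun s hs => (hr s hs.1).continuousAt.continuousWithinAt
  -- the flow operator
  set F : ℝ → (EuclideanSpace ℝ (Fin n) →L[ℝ] EuclideanSpace ℝ (Fin n)) :=
    fun s => NormedSpace.exp ((s - t) • A) with hFdef
  have hFc : Continuous F := by
    apply (continuous_iff_continuousAt.2 fun x => (NormedSpace.exp_analytic (𝕂 := ℝ) x).continuousAt).comp
    exact (continuous_id.sub continuous_const).smul continuous_const
  -- the Duhamel integrand
  set D : ℝ → EuclideanSpace ℝ (Fin n) :=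
    fun s => F s ((Matrix.toEuclideanCLM (𝕜 := ℝ) (G - Gt s)) (r s)) with hDdef
  have hDc : ContinuousOn D (Set.uIcc (0:ℝ) t) := by
    apply hFc.continuousOn.clm_apply
    have h1 : Continuous fun s => Matrix.toEuclideanCLM (𝕜 := ℝ) (G - Gt s) := by
      simp only [← hφ]
      exact hφc.comp (continuous_const.sub hGt)
    exact h1.continuousOn.clm_apply hrc
  have hDint : IntervalIntegrable D volume 0 t := hDc.intervalIntegrable
  -- derivative of s ↦ F s (r s)
  have hgderiv : ∀ s ∈ Set.uIcc (0:ℝ) t, HasDerivAt (fun σ => F σ (r σ)) (D s) s := by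
    intro s hs
    rw [huIcc] at hs
    have hF' : HasDerivAt F (F s * A) s := by
      have h1 := hasDerivAt_exp_smul_const (𝕂 := ℝ) A (s - t)
      have h2 : HasDerivAt (fun σ : ℝ => σ - t) 1 s := (hasDerivAt_id s).sub_const t
      have h3 := h1.scomp s h2
      rw [one_smul] at h3
      exact h3
    have h4 := hF'.clm_apply (hr s hs.1)
    have h5 : D s = (F s * A) (r s) + F s (-(Matrix.toEuclideanCLM (𝕜 := ℝ) (Gt s)) (r s)) := by
      have hsub : Matrix.toEuclideanCLM (𝕜 := ℝ) (G - Gt s)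
          = A - Matrix.toEuclideanCLM (𝕜 := ℝ) (Gt s) := map_sub _ _ _
      rw [hDdef]
      simp only [hsub, ContinuousLinearMap.sub_apply, ContinuousLinearMap.mul_apply,
        map_sub, map_neg]
      abel
    rw [h5]
    exact h4
  -- Duhamel formula
  have key : r t - NormedSpace.exp (-(t • A)) (r 0) = ∫ s in (0:ℝ)..t, D s := by
    have h1 := intervalIntegral.integral_eq_sub_of_hasDerivAt hgderiv hDint
    have h2 : F t (r t) = r t := by
      show (NormedSpace.exp ((t - t) • A)) (r t) = r t
      rw [sub_self]
      rw [show ((0:ℝ) • A) = 0 from zero_smul ℝ A]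
      rw [NormedSpace.exp_zero, ContinuousLinearMap.one_apply]
    have h3 : F 0 (r 0) = NormedSpace.exp (-(t • A)) (r 0) := by
      show (NormedSpace.exp ((0 - t) • A)) (r 0) = NormedSpace.exp (-(t • A)) (r 0)
      rw [zero_sub]
      rw [show ((-t) • A) = -(t • A) from neg_smul t A]
    rw [h1, h2, h3]
  -- bounds
  have hM0 : ∀ s ∈ Set.Icc (0:ℝ) t, ‖Matrix.toEuclideanCLM (𝕜 := ℝ) (G - Gt s)‖ ≤ M := by
    intro s hs
    have hcont : ContinuousOn (fun s => ‖Matrix.toEuclideanCLM (𝕜 := ℝ) (G - Gt s)‖)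
        (Set.Icc (0:ℝ) t) := by
      simp only [← hφ]
      exact ((hφc.comp (continuous_const.sub hGt)).norm).continuousOn
    have hbdd : BddAbove ((fun s => ‖Matrix.toEuclideanCLM (𝕜 := ℝ) (G - Gt s)‖) ''
        Set.Icc (0:ℝ) t) := (isCompact_Icc.image_of_continuousOn hcont).bddAbove
    have himr : ((fun s => ‖Matrix.toEuclideanCLM (𝕜 := ℝ) (G - Gt s)‖) '' Set.Icc (0:ℝ) t)
        = Set.range fun s : (Set.Icc (0:ℝ) t) => ‖Matrix.toEuclideanCLM (𝕜 := ℝ) (G - Gt s)‖ :=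
      Set.image_eq_range _ _
    have hbdd' : BddAbove (Set.range fun s : (Set.Icc (0:ℝ) t) =>
        ‖Matrix.toEuclideanCLM (𝕜 := ℝ) (G - Gt s)‖) := himr ▸ hbdd
    have hne : (Set.Icc (0:ℝ) t).Nonempty := ⟨0, Set.left_mem_Icc.mpr ht⟩
    have hpos : (0:ℝ) ≤ ⨆ s : (Set.Icc (0:ℝ) t), ‖Matrix.toEuclideanCLM (𝕜 := ℝ) (G - Gt s)‖ :=
      le_trans (norm_nonneg _) (le_ciSup_set hbdd (Set.left_mem_Icc.mpr ht))
    have hsub : (⨆ s : (Set.Icc (0:ℝ) t), ‖Matrix.toEuclideanCLM (𝕜 := ℝ) (G - Gt s)‖) = M := by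
      rw [hMdef]
      exact ciSup_subtype_fun (f := fun s => ‖Matrix.toEuclideanCLM (𝕜 := ℝ) (G - Gt s)‖)
        hbdd' (by rw [Real.sSup_empty]; exact hpos)
    exact le_trans (le_ciSup_set hbdd hs) (le_of_eq hsub)
  have hr0 : ∀ s ∈ Set.Icc (0:ℝ) t, ‖r s‖ ≤ ‖r 0‖ := fun s hs =>
    hrmono Set.self_mem_Ici hs.1 hs.1
  have hMnonneg : 0 ≤ M := le_trans (norm_nonneg _) (hM0 0 (Set.left_mem_Icc.mpr ht))
  -- pointwise bound on ‖P (D s)‖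
  have hptwise : ∀ s ∈ Set.Icc (0:ℝ) t,
      ‖P (D s)‖ ≤ Real.exp (-(lam k) * (t - s)) * (M * ‖r 0‖) := by
    intro s hs
    have hFs : F s = NormedSpace.exp (-((t - s) • A)) := by
      show NormedSpace.exp ((s - t) • A) = NormedSpace.exp (-((t - s) • A))
      rw [show -((t - s) • A) = (-(t - s)) • A from (neg_smul (t - s) A).symm, neg_sub]
    set w : EuclideanSpace ℝ (Fin n) :=
      (Matrix.toEuclideanCLM (𝕜 := ℝ) (G - Gt s)) (r s) with hwdef
    have h1 : ‖P (D s)‖ ≤ Real.exp (-(lam k * (t - s))) * ‖w‖ := by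
      have := aux_proj_contract u hu lam hmono A hsymA heig k K hK (t - s)
        (by linarith [hs.2]) w
      rw [hDdef]
      simp only [hFs]
      exact this
    have h2 : ‖w‖ ≤ M * ‖r 0‖ := by
      calc ‖w‖ ≤ ‖Matrix.toEuclideanCLM (𝕜 := ℝ) (G - Gt s)‖ * ‖r s‖ :=
            ContinuousLinearMap.le_opNorm _ _
        _ ≤ M * ‖r 0‖ :=
            mul_le_mul (hM0 s hs) (hr0 s hs) (norm_nonneg _) hMnonneg
    calc ‖P (D s)‖ ≤ Real.exp (-(lam k * (t - s))) * ‖w‖ := h1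
      _ ≤ Real.exp (-(lam k) * (t - s)) * (M * ‖r 0‖) := by
          rw [show -(lam k * (t - s)) = -(lam k) * (t - s) by ring]
          exact mul_le_mul_of_nonneg_left h2 (Real.exp_nonneg _)
  -- integrability of both sides
  have hPDint : IntervalIntegrable (fun s => ‖P (D s)‖) volume 0 t :=
    ((P.continuous.comp_continuousOn hDc).norm).intervalIntegrable
  have hbint : IntervalIntegrable (fun s => Real.exp (-(lam k) * (t - s)) * (M * ‖r 0‖))
      volume 0 t := by
    apply Continuous.intervalIntegrable
    have hc : Continuous fun s : ℝ => -(lam k) * (t - s) :=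
      (continuous_const.mul (continuous_const.sub continuous_id))
    exact (Real.continuous_exp.comp hc).mul continuous_const
  -- putting it together
  calc ‖P (r t - NormedSpace.exp (-(t • A)) (r 0))‖
      = ‖∫ s in (0:ℝ)..t, P (D s)‖ := by
        rw [key, P.intervalIntegral_comp_comm hDint]
    _ ≤ ∫ s in (0:ℝ)..t, ‖P (D s)‖ := intervalIntegral.norm_integral_le_integral_norm ht
    _ ≤ ∫ s in (0:ℝ)..t, Real.exp (-(lam k) * (t - s)) * (M * ‖r 0‖) := by
        apply intervalIntegral.integral_mono_on ht hPDint hbint hptwise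
    _ = ((1 - Real.exp (-(lam k) * t)) / lam k) * (M * ‖r 0‖) := by
        rw [intervalIntegral.integral_mul_const, aux_integral_exp (lam k) t (ne_of_gt hk)]
    _ = ((1 - Real.exp (-(lam k) * t)) / lam k) * M * ‖r 0‖ := by ring
end

section
/- Let X ⊆ ℝ^d with ‖x‖₂ ≤ M for all x ∈ X, and let σ : ℝ → ℝ be differentiable with ‖σ'‖_∞ < ∞. For parameters (a, W, b, b₀) with a, b ∈ ℝ^m, W ∈ ℝ^{m×d}, b₀ ∈ ℝ, define f(x) = (1/√m) aᵀ σ(Wx + b) + b₀ (σ applied entrywise). If ‖a - ã‖₂ ≤ ε/(4γ'), ‖W - W̃‖_F ≤ ε/(8 M ‖σ'‖_∞ ρ₁'), ‖b - b̃‖₂ ≤ ε/(8 ‖σ'‖_∞ ρ₁'), |b₀ - b̃₀| ≤ ε/2, where (1/√m)‖a‖₂ ≤ ρ₁', (1/√m)‖W̃‖_op ≤ ρ₂', (1/√m)‖b̃‖₂ ≤ ρ₃', and γ' := |σ(0)| + ‖σ'‖_∞(ρ₂' M + ρ₃'), then sup_{x ∈ X} |f(x; a, W, b, b₀) - f(x;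 ã, W̃, b̃, b̃₀)| ≤ ε. -/
/-- Euclidean norm of a finite real vector. -/
noncomputable def en {k : ℕ} (v : Fin k → ℝ) : ℝ :=
  ‖(WithLp.equiv 2 (Fin k → ℝ)).symm v‖

/-- Operator norm of a matrix induced by the Euclidean norms. -/
noncomputable def l2opNorm {m d : ℕ} (W : Matrix (Fin m) (Fin d) ℝ) : ℝ :=
  ‖LinearMap.toContinuousLinearMap (Matrix.toEuclideanLin W)‖

/-- Frobenius norm of a matrix. -/
noncomputable def frobNorm {m d : ℕ} (W : Matrix (Fin m) (Fin d) ℝ) : ℝ :=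
  Real.sqrt (∑ i, ∑ j, (W i j) ^ 2)

lemma en_eq {k : ℕ} (v : Fin k → ℝ) : en v = Real.sqrt (∑ i, v i ^ 2) := by
  rw [en, EuclideanSpace.norm_eq]
  exact congrArg _ (Finset.sum_congr rfl fun i _ => by rw [Real.norm_eq_abs, sq_abs]; rfl)

lemma en_nonneg {k : ℕ} (v : Fin k → ℝ) : 0 ≤ en v := norm_nonneg _

lemma en_add_le {k : ℕ} (v w : Fin k → ℝ) : en (v + w) ≤ en v + en w :=
  norm_add_le _ _

lemma en_cs {k : ℕ} (v w : Fin k → ℝ) : |∑ i, v i * w i| ≤ en v * en w := by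
  rw [en_eq, en_eq, ← Real.sqrt_mul (by positivity), ← Real.sqrt_sq_eq_abs]
  exact Real.sqrt_le_sqrt (Finset.sum_mul_sq_le_sq_mul_sq _ _ _)

lemma en_mono {k : ℕ} (v w : Fin k → ℝ) (h : ∀ i, |v i| ≤ |w i|) : en v ≤ en w := by
  rw [en_eq, en_eq]
  refine Real.sqrt_le_sqrt (Finset.sum_le_sum fun i _ => ?_)
  rw [← sq_abs (v i), ← sq_abs (w i)]
  exact pow_le_pow_left₀ (abs_nonneg _) (h i) 2

lemma en_op_mulVec {m d : ℕ} (W : Matrix (Fin m) (Fin d) ℝ) (x : Fin d → ℝ) :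
    en (W.mulVec x) ≤ l2opNorm W * en x := by
  have := (LinearMap.toContinuousLinearMap (Matrix.toEuclideanLin W)).le_opNorm
    ((WithLp.equiv 2 (Fin d → ℝ)).symm x)
  simpa [en, l2opNorm, Matrix.toEuclideanLin_apply_piLp_toLp] using this

lemma en_frob_mulVec {m d : ℕ} (W : Matrix (Fin m) (Fin d) ℝ) (x : Fin d → ℝ) :
    en (W.mulVec x) ≤ frobNorm W * en x := by
  rw [en_eq, en_eq, frobNorm, ← Real.sqrt_mul (by positivity)]
  refine Real.sqrt_le_sqrt ?_
  rw [Finset.sum_mul]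
  refine Finset.sum_le_sum fun i _ => ?_
  have : W.mulVec x i = ∑ j, W i j * x j := by
    simp [Matrix.mulVec, dotProduct]
  rw [this]
  exact Finset.sum_mul_sq_le_sq_mul_sq _ _ _

lemma lip_of_deriv (σ : ℝ → ℝ) (hσ : Differentiable ℝ σ) (Sd : ℝ)
    (hSd : ∀ z, |deriv σ z| ≤ Sd) (x y : ℝ) : |σ x - σ y| ≤ Sd * |x - y| := by
  have hSd0 : 0 ≤ Sd := (abs_nonneg _).trans (hSd 0)
  have h : LipschitzWith Sd.toNNReal σ := by
    refine lipschitzWith_of_nnnorm_deriv_le hσ fun z => ?_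
    rw [← NNReal.coe_le_coe, coe_nnnorm, Real.coe_toNNReal _ hSd0, Real.norm_eq_abs]
    exact hSd z
  have := h.dist_le_mul x y
  rwa [Real.dist_eq, Real.dist_eq, Real.coe_toNNReal _ hSd0] at this

/-- Perturbation bound for shallow networks `f(x) = (1/√m) aᵀ σ(Wx + b) + b₀`: if the
parameters of two networks are close (relative to the stated scales), then the networks are
uniformly `ε`-close on the ball of radius `M`.  This is the quantitative core of the
covering-number estimate for the class of bounded-parameter shallow networks. -/
theorem shallow_network_perturbation_bound {m d : ℕ}
    (σ : ℝ → ℝ) (hσ : Differentiable ℝ σ) (Sd : ℝ) (hSd : ∀ z, |deriv σ z| ≤ Sd)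
    (M : ℝ) (hM : 0 < M)
    (a a₂ b b₂ : Fin m → ℝ) (W W₂ : Matrix (Fin m) (Fin d) ℝ) (b₀ c₀ : ℝ)
    (ρ₁' ρ₂' ρ₃' ε : ℝ) (hε : 0 < ε) (hρ₁' : 0 < ρ₁')
    (γ' : ℝ) (hγ' : γ' = |σ 0| + Sd * (ρ₂' * M + ρ₃'))
    (ha' : (1 / Real.sqrt m) * en a ≤ ρ₁')
    (hW' : (1 / Real.sqrt m) * l2opNorm W₂ ≤ ρ₂')
    (hb' : (1 / Real.sqrt m) * en b₂ ≤ ρ₃')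
    (ha : en (a - a₂) ≤ ε / (4 * γ'))
    (hW : frobNorm (W - W₂) ≤ ε / (8 * M * Sd * ρ₁'))
    (hb : en (b - b₂) ≤ ε / (8 * Sd * ρ₁'))
    (hb₀ : |b₀ - c₀| ≤ ε / 2) :
    ∀ x : Fin d → ℝ, en x ≤ M →
      |((1 / Real.sqrt m) * ∑ ℓ, a ℓ * σ (W.mulVec x ℓ + b ℓ) + b₀) -
        ((1 / Real.sqrt m) * ∑ ℓ, a₂ ℓ * σ (W₂.mulVec x ℓ + b₂ ℓ) + c₀)| ≤ ε := by
  intro x hx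
  have hSd0 : 0 ≤ Sd := (abs_nonneg _).trans (hSd 0)
  rcases Nat.eq_zero_or_pos m with hm | hm
  · subst hm
    have h0 : (Finset.univ : Finset (Fin 0)) = ∅ := rfl
    rw [h0, Finset.sum_empty, Finset.sum_empty, mul_zero, zero_add, zero_add]
    linarith
  have hsm : (0:ℝ) < Real.sqrt m := Real.sqrt_pos.2 (by exact_mod_cast hm)
  set s : ℝ := 1 / Real.sqrt m with hs_def
  have hs : 0 < s := by positivity
  have hsm1 : s * Real.sqrt m = 1 := by
    rw [hs_def, one_div, inv_mul_cancel₀ (ne_of_gt hsm)]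
  -- abbreviations
  set u : Fin m → ℝ := fun ℓ => W.mulVec x ℓ + b ℓ with hu
  set u₂ : Fin m → ℝ := fun ℓ => W₂.mulVec x ℓ + b₂ ℓ with hu₂
  -- nonnegativity of scales
  have hρ2 : 0 ≤ ρ₂' := le_trans (mul_nonneg hs.le (norm_nonneg _)) hW'
  have hρ3 : 0 ≤ ρ₃' := le_trans (mul_nonneg hs.le (en_nonneg _)) hb'
  have hscale : ∀ X ρ : ℝ, s * X ≤ ρ → X ≤ Real.sqrt m * ρ := by
    intro X ρ h
    have hX : X = Real.sqrt m * (s * X) := by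
      rw [hs_def]; field_simp
    rw [hX]
    exact mul_le_mul_of_nonneg_left h hsm.le
  have hγ0 : 0 ≤ γ' := by
    rw [hγ']
    positivity
  -- bound on ‖u₂‖
  have hu2 : en u₂ ≤ Real.sqrt m * (ρ₂' * M + ρ₃') := by
    have h1 : en (W₂.mulVec x) ≤ Real.sqrt m * ρ₂' * M := by
      refine le_trans (en_op_mulVec W₂ x) ?_
      have hop : l2opNorm W₂ ≤ Real.sqrt m * ρ₂' := hscale _ _ hW'
      exact mul_le_mul hop hx (en_nonneg x) (by positivity)
    have h2 : en b₂ ≤ Real.sqrt m * ρ₃' := hscale _ _ hb'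
    calc en u₂ ≤ en (W₂.mulVec x) + en b₂ := en_add_le _ _
      _ ≤ Real.sqrt m * ρ₂' * M + Real.sqrt m * ρ₃' := add_le_add h1 h2
      _ = Real.sqrt m * (ρ₂' * M + ρ₃') := by ring
  -- bound on ‖σ ∘ u₂‖
  have hσu2 : en (fun ℓ => σ (u₂ ℓ)) ≤ Real.sqrt m * γ' := by
    have hpt : ∀ ℓ, |σ (u₂ ℓ)| ≤ |(fun ℓ => |σ 0| + Sd * |u₂ ℓ|) ℓ| := by
      intro ℓ
      have h := lip_of_deriv σ hσ Sd hSd (u₂ ℓ) 0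
      rw [sub_zero] at h
      have : |σ (u₂ ℓ)| ≤ |σ 0| + Sd * |u₂ ℓ| := by
        calc |σ (u₂ ℓ)| ≤ |σ (u₂ ℓ) - σ 0| + |σ 0| := by
              have := abs_sub_abs_le_abs_sub (σ (u₂ ℓ)) (σ 0)
              linarith [abs_nonneg (σ 0)]
          _ ≤ Sd * |u₂ ℓ| + |σ 0| := by linarith
          _ = |σ 0| + Sd * |u₂ ℓ| := by ring
      refine this.trans (le_abs_self _)
    have h1 : en (fun ℓ => σ (u₂ ℓ)) ≤ en (fun ℓ : Fin m => |σ 0| + Sd * |u₂ ℓ|) :=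
      en_mono _ _ hpt
    have h2 : en (fun ℓ : Fin m => |σ 0| + Sd * |u₂ ℓ|)
        ≤ Real.sqrt m * |σ 0| + Sd * en u₂ := by
      have hsplit : (fun ℓ : Fin m => |σ 0| + Sd * |u₂ ℓ|)
          = (fun _ : Fin m => |σ 0|) + fun ℓ => Sd * |u₂ ℓ| := rfl
      rw [hsplit]
      refine le_trans (en_add_le _ _) (add_le_add ?_ ?_)
      · rw [en_eq]
        rw [Finset.sum_const, Finset.card_univ, Fintype.card_fin, nsmul_eq_mul,
          Real.sqrt_mul (by positivity), Real.sqrt_sq_eq_abs, abs_abs]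
      · rw [en_eq, en_eq]
        have : ∀ ℓ : Fin m, (Sd * |u₂ ℓ|) ^ 2 = Sd ^ 2 * u₂ ℓ ^ 2 := by
          intro ℓ; rw [mul_pow, sq_abs]
        simp_rw [this]
        rw [← Finset.mul_sum, Real.sqrt_mul (by positivity), Real.sqrt_sq hSd0]
    refine h1.trans (h2.trans ?_)
    have : Sd * en u₂ ≤ Sd * (Real.sqrt m * (ρ₂' * M + ρ₃')) :=
      mul_le_mul_of_nonneg_left hu2 hSd0
    rw [hγ']
    nlinarith [Real.sqrt_nonneg (m:ℝ)]
  -- decomposition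
  have hdecomp : (s * ∑ ℓ, a ℓ * σ (u ℓ) + b₀) - (s * ∑ ℓ, a₂ ℓ * σ (u₂ ℓ) + c₀)
      = s * (∑ ℓ, a ℓ * (σ (u ℓ) - σ (u₂ ℓ))) + s * (∑ ℓ, (a ℓ - a₂ ℓ) * σ (u₂ ℓ))
        + (b₀ - c₀) := by
    have hpt : ∀ ℓ : Fin m, a ℓ * σ (u ℓ) - a₂ ℓ * σ (u₂ ℓ)
        = a ℓ * (σ (u ℓ) - σ (u₂ ℓ)) + (a ℓ - a₂ ℓ) * σ (u₂ ℓ) := fun ℓ => by ring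
    have hsum : (∑ ℓ, a ℓ * σ (u ℓ)) - (∑ ℓ, a₂ ℓ * σ (u₂ ℓ))
        = (∑ ℓ, a ℓ * (σ (u ℓ) - σ (u₂ ℓ))) + (∑ ℓ, (a ℓ - a₂ ℓ) * σ (u₂ ℓ)) := by
      rw [← Finset.sum_sub_distrib, ← Finset.sum_add_distrib]
      exact Finset.sum_congr rfl fun ℓ _ => hpt ℓ
    calc (s * ∑ ℓ, a ℓ * σ (u ℓ) + b₀) - (s * ∑ ℓ, a₂ ℓ * σ (u₂ ℓ) + c₀)
        = s * ((∑ ℓ, a ℓ * σ (u ℓ)) - (∑ ℓ, a₂ ℓ * σ (u₂ ℓ))) + (b₀ - c₀) := by ring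
      _ = _ := by rw [hsum]; ring
  -- term 2 bound
  have hT2 : s * |∑ ℓ, (a ℓ - a₂ ℓ) * σ (u₂ ℓ)| ≤ ε / 4 := by
    have h1 : |∑ ℓ, (a ℓ - a₂ ℓ) * σ (u₂ ℓ)| ≤ en (a - a₂) * (Real.sqrt m * γ') := by
      refine le_trans (en_cs (a - a₂) fun ℓ => σ (u₂ ℓ)) ?_
      exact mul_le_mul_of_nonneg_left hσu2 (en_nonneg _)
    have h2 : s * (en (a - a₂) * (Real.sqrt m * γ')) = en (a - a₂) * γ' := by
      have : s * (en (a - a₂) * (Real.sqrt m * γ'))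
          = (s * Real.sqrt m) * (en (a - a₂) * γ') := by ring
      rw [this, hsm1, one_mul]
    have h3 : en (a - a₂) * γ' ≤ ε / 4 := by
      rcases eq_or_lt_of_le hγ0 with hγ | hγ
      · rw [← hγ, mul_zero]; positivity
      · have := mul_le_mul_of_nonneg_right ha hγ0
        rwa [div_mul_eq_mul_div, mul_comm (4:ℝ) γ', ← div_div,
          mul_div_assoc, div_self (ne_of_gt hγ), mul_one] at this
    calc s * |∑ ℓ, (a ℓ - a₂ ℓ) * σ (u₂ ℓ)|
        ≤ s * (en (a - a₂) * (Real.sqrt m * γ')) := mul_le_mul_of_nonneg_left h1 hs.le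
      _ = en (a - a₂) * γ' := h2
      _ ≤ ε / 4 := h3
  -- term 1 bound
  have hT1 : s * |∑ ℓ, a ℓ * (σ (u ℓ) - σ (u₂ ℓ))| ≤ ε / 4 := by
    have hdiff : en (fun ℓ => σ (u ℓ) - σ (u₂ ℓ)) ≤ Sd * en (u - u₂) := by
      have h1 : en (fun ℓ => σ (u ℓ) - σ (u₂ ℓ))
          ≤ en (fun ℓ : Fin m => Sd * |u ℓ - u₂ ℓ|) := by
        refine en_mono _ _ fun ℓ => ?_
        refine le_trans (lip_of_deriv σ hσ Sd hSd (u ℓ) (u₂ ℓ)) (le_abs_self _)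
      have h2 : en (fun ℓ : Fin m => Sd * |u ℓ - u₂ ℓ|) = Sd * en (u - u₂) := by
        rw [en_eq, en_eq]
        have : ∀ ℓ : Fin m, (Sd * |u ℓ - u₂ ℓ|) ^ 2 = Sd ^ 2 * ((u - u₂) ℓ) ^ 2 := by
          intro ℓ; rw [mul_pow, sq_abs]; rfl
        simp_rw [this]
        rw [← Finset.mul_sum, Real.sqrt_mul (by positivity), Real.sqrt_sq hSd0]
      rw [← h2]; exact h1
    have huu2 : en (u - u₂) ≤ frobNorm (W - W₂) * M + en (b - b₂) := by
      have heq : u - u₂ = (W - W₂).mulVec x + (b - b₂) := by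
        funext ℓ
        simp only [Pi.sub_apply, Pi.add_apply, hu, hu₂, Matrix.sub_mulVec]
        ring
      rw [heq]
      refine le_trans (en_add_le _ _) (add_le_add ?_ le_rfl)
      refine le_trans (en_frob_mulVec _ x) ?_
      have : 0 ≤ frobNorm (W - W₂) := Real.sqrt_nonneg _
      exact mul_le_mul_of_nonneg_left hx this
    have hena : en a ≤ Real.sqrt m * ρ₁' := hscale _ _ ha'
    have hcs : |∑ ℓ, a ℓ * (σ (u ℓ) - σ (u₂ ℓ))|
        ≤ en a * (Sd * (frobNorm (W - W₂) * M + en (b - b₂))) := by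
      refine le_trans (en_cs a fun ℓ => σ (u ℓ) - σ (u₂ ℓ)) ?_
      refine mul_le_mul_of_nonneg_left ?_ (en_nonneg a)
      exact hdiff.trans (mul_le_mul_of_nonneg_left huu2 hSd0)
    have key : s * |∑ ℓ, a ℓ * (σ (u ℓ) - σ (u₂ ℓ))|
        ≤ ρ₁' * (Sd * (frobNorm (W - W₂) * M + en (b - b₂))) := by
      have h4 : 0 ≤ Sd * (frobNorm (W - W₂) * M + en (b - b₂)) := by
        have := Real.sqrt_nonneg (∑ i, ∑ j, ((W - W₂) i j) ^ 2)
        have := en_nonneg (b - b₂)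
        have : (0:ℝ) ≤ frobNorm (W - W₂) * M + en (b - b₂) := by
          have hf : 0 ≤ frobNorm (W - W₂) := Real.sqrt_nonneg _
          nlinarith
        positivity
      calc s * |∑ ℓ, a ℓ * (σ (u ℓ) - σ (u₂ ℓ))|
          ≤ s * (en a * (Sd * (frobNorm (W - W₂) * M + en (b - b₂)))) :=
            mul_le_mul_of_nonneg_left hcs hs.le
        _ ≤ s * (Real.sqrt m * ρ₁' * (Sd * (frobNorm (W - W₂) * M + en (b - b₂)))) := by
            refine mul_le_mul_of_nonneg_left ?_ hs.le
            exact mul_le_mul_of_nonneg_right hena h4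
        _ = (s * Real.sqrt m) * (ρ₁' * (Sd * (frobNorm (W - W₂) * M + en (b - b₂)))) := by
            ring
        _ = ρ₁' * (Sd * (frobNorm (W - W₂) * M + en (b - b₂))) := by
            rw [hsm1, one_mul]
    refine key.trans ?_
    rcases eq_or_lt_of_le hSd0 with hSd1 | hSd1
    · rw [← hSd1]
      simp only [zero_mul, mul_zero]
      positivity
    · have hf : frobNorm (W - W₂) * M ≤ ε / (8 * Sd * ρ₁') := by
        have := mul_le_mul_of_nonneg_right hW hM.le
        refine this.trans (le_of_eq ?_)
        field_simp
      have h8 : Sd * (frobNorm (W - W₂) * M + en (b - b₂))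
          ≤ Sd * (ε / (8 * Sd * ρ₁') + ε / (8 * Sd * ρ₁')) :=
        mul_le_mul_of_nonneg_left (add_le_add hf hb) hSd0
      have heq : ρ₁' * (Sd * (ε / (8 * Sd * ρ₁') + ε / (8 * Sd * ρ₁'))) = ε / 4 := by
        field_simp
        ring
      calc ρ₁' * (Sd * (frobNorm (W - W₂) * M + en (b - b₂)))
          ≤ ρ₁' * (Sd * (ε / (8 * Sd * ρ₁') + ε / (8 * Sd * ρ₁'))) :=
            mul_le_mul_of_nonneg_left h8 hρ₁'.le
        _ = ε / 4 := heq
  -- combine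
  calc |(s * ∑ ℓ, a ℓ * σ (u ℓ) + b₀) - (s * ∑ ℓ, a₂ ℓ * σ (u₂ ℓ) + c₀)|
      = |s * (∑ ℓ, a ℓ * (σ (u ℓ) - σ (u₂ ℓ))) + s * (∑ ℓ, (a ℓ - a₂ ℓ) * σ (u₂ ℓ))
          + (b₀ - c₀)| := by rw [hdecomp]
    _ ≤ |s * (∑ ℓ, a ℓ * (σ (u ℓ) - σ (u₂ ℓ))) + s * (∑ ℓ, (a ℓ - a₂ ℓ) * σ (u₂ ℓ))|
          + |b₀ - c₀| := abs_add_le _ _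
    _ ≤ |s * (∑ ℓ, a ℓ * (σ (u ℓ) - σ (u₂ ℓ)))| + |s * (∑ ℓ, (a ℓ - a₂ ℓ) * σ (u₂ ℓ))|
          + |b₀ - c₀| := add_le_add_left (abs_add_le _ _) _
    _ = s * |∑ ℓ, a ℓ * (σ (u ℓ) - σ (u₂ ℓ))| + s * |∑ ℓ, (a ℓ - a₂ ℓ) * σ (u₂ ℓ)|
          + |b₀ - c₀| := by
            rw [abs_mul, abs_mul, abs_of_pos hs]
    _ ≤ ε / 4 + ε / 4 + ε / 2 := by linarith
    _ = ε := by ring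
end
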